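/- arXiv:1906.09531 — 4 statements merged into one kernel-verified Lean document; each statement's English description precedes it below -/
import Mathlib

section
/- With the setup of the resampled model p_{θ,φ} ∝ p_θ·ŵ: the resampled model improves (does not worsen) the KL fit, i.e. KL(p_data ‖ p_{θ,φ}) ≤ KL(p_data ‖ p_θ), if and only if E_{x∼p_data}[log ŵ(x)] ≥ log E_{x∼p_θ}[ŵ(x)]. -/
open MeasureTheory

/-- The importance resampled model `p_{θ,φ} ∝ pθ · ŵ` does not worsen the KL fit to
`p_data` if and only if `E_{p_data}[log ŵ] ≥ log E_{pθ}[ŵ]`. -/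
theorem resampling_improves_kl_iff
    {X : Type*} [MeasurableSpace X] (μ : Measure X)
    (pdata pθ w : X → ℝ) (Z : ℝ)
    (hpdata : ∀ x, 0 ≤ pdata x) (hpθ : ∀ x, 0 ≤ pθ x)
    (hpdata1 : ∫ x, pdata x ∂μ = 1) (hpθ1 : ∫ x, pθ x ∂μ = 1)
    (habs : ∀ x, pθ x = 0 → pdata x = 0)
    (hw : ∀ x, 0 < w x)
    (hZ : Z = ∫ x, pθ x * w x ∂μ) (hZpos : 0 < Z)
    (hZfin : Integrable (fun x => pθ x * w x) μ)
    (pφ : X → ℝ) (hpφ : ∀ x, pφ x = pθ x * w x / Z)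
    (hint1 : Integrable (fun x => pdata x * Real.log (pdata x / pφ x)) μ)
    (hint2 : Integrable (fun x => pdata x * Real.log (pdata x / pθ x)) μ)
    (hint3 : Integrable (fun x => pdata x * Real.log (w x)) μ) :
    (∫ x, pdata x * Real.log (pdata x / pφ x) ∂μ)
      ≤ (∫ x, pdata x * Real.log (pdata x / pθ x) ∂μ)
    ↔ (∫ x, pdata x * Real.log (w x) ∂μ) ≥ Real.log (∫ x, pθ x * w x ∂μ) := by
  have hpd_int : Integrable pdata μ := by
    by_contra h
    rw [integral_undef h] at hpdata1
    norm_num at hpdata1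
  -- pointwise identity
  have hkey : ∀ x, pdata x * Real.log (pdata x / pφ x)
      = pdata x * Real.log (pdata x / pθ x) - pdata x * Real.log (w x)
        + Real.log Z * pdata x := by
    intro x
    rcases eq_or_lt_of_le (hpdata x) with h0 | hpos
    · simp [← h0]
    · have hθpos : 0 < pθ x := by
        rcases eq_or_lt_of_le (hpθ x) with h | h
        · exact absurd (habs x h.symm) (by positivity)
        · exact h
      rw [hpφ x]
      rw [div_div_eq_mul_div, Real.log_div (mul_pos hpos hZpos).ne' (mul_pos hθpos (hw x)).ne',
        Real.log_mul hpos.ne' hZpos.ne',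
        Real.log_mul hθpos.ne' (hw x).ne',
        Real.log_div hpos.ne' hθpos.ne']
      ring
  have hint : ∫ x, pdata x * Real.log (pdata x / pφ x) ∂μ
      = (∫ x, pdata x * Real.log (pdata x / pθ x) ∂μ)
        - (∫ x, pdata x * Real.log (w x) ∂μ) + Real.log Z := by
    calc ∫ x, pdata x * Real.log (pdata x / pφ x) ∂μ
        = ∫ x, (pdata x * Real.log (pdata x / pθ x) - pdata x * Real.log (w x)
            + Real.log Z * pdata x) ∂μ := by
          exact integral_congr_ae (Filter.Eventually.of_forall hkey)
      _ = (∫ x, pdata x * Real.log (pdata x / pθ x) ∂μ)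
            - (∫ x, pdata x * Real.log (w x) ∂μ) + Real.log Z := by
          have h4 : Integrable (fun x => pdata x * Real.log (pdata x / pθ x)
              - pdata x * Real.log (w x)) μ := hint2.sub hint3
          rw [integral_add h4 (hpd_int.const_mul _),
            integral_sub hint2 hint3, integral_const_mul, hpdata1, mul_one]
  rw [hint, ← hZ]
  constructor <;> intro h <;> linarith
end

section
/- (Proposition 1, condition 1) If KL(p_data ‖ p_{θ,φ}) ≤ KL(p_data ‖ p_θ), then E_{x∼p_data}[ŵ(x)] ≥ E_{x∼p_θ}[ŵ(x)]. -/
open MeasureTheory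

/-- Proposition 1, condition 1: if the importance resampled model `p_{θ,φ} ∝ pθ · ŵ`
does not worsen the KL fit to `p_data`, then `E_{p_data}[ŵ] ≥ E_{pθ}[ŵ]`. -/
theorem resampling_necessary_condition_weights
    {X : Type*} [MeasurableSpace X] (μ : Measure X)
    (pdata pθ w : X → ℝ) (Z : ℝ)
    (hpdata : ∀ x, 0 ≤ pdata x) (hpθ : ∀ x, 0 ≤ pθ x)
    (hpdata1 : ∫ x, pdata x ∂μ = 1) (hpθ1 : ∫ x, pθ x ∂μ = 1)
    (habs : ∀ x, pθ x = 0 → pdata x = 0)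
    (hw : ∀ x, 0 < w x)
    (hZ : Z = ∫ x, pθ x * w x ∂μ) (hZpos : 0 < Z)
    (hZfin : Integrable (fun x => pθ x * w x) μ)
    (hwdata : Integrable (fun x => pdata x * w x) μ)
    (pφ : X → ℝ) (hpφ : ∀ x, pφ x = pθ x * w x / Z)
    (hint1 : Integrable (fun x => pdata x * Real.log (pdata x / pφ x)) μ)
    (hint2 : Integrable (fun x => pdata x * Real.log (pdata x / pθ x)) μ)
    (hint3 : Integrable (fun x => pdata x * Real.log (w x)) μ)
    (hkl : (∫ x, pdata x * Real.log (pdata x / pφ x) ∂μ)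
      ≤ (∫ x, pdata x * Real.log (pdata x / pθ x) ∂μ)) :
    (∫ x, pdata x * w x ∂μ) ≥ ∫ x, pθ x * w x ∂μ := by
  -- pdata is integrable since its integral is 1 ≠ 0
  have hpint : Integrable pdata μ := by
    by_contra h
    rw [integral_undef h] at hpdata1
    norm_num at hpdata1
  -- pointwise identity
  have hpt : ∀ x, pdata x * Real.log (pdata x / pφ x)
      = pdata x * Real.log (pdata x / pθ x) - pdata x * Real.log (w x)
        + pdata x * Real.log Z := by
    intro x
    rcases eq_or_lt_of_le (hpdata x) with h0 | h0
    · simp [← h0]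
    · have hθ : 0 < pθ x := by
        rcases eq_or_lt_of_le (hpθ x) with h | h
        · exact absurd (habs x h.symm) (ne_of_gt h0)
        · exact h
      have hwx := hw x
      rw [hpφ x]
      rw [div_div_eq_mul_div, Real.log_div (by positivity) (by positivity),
        Real.log_mul (by positivity) (by positivity),
        Real.log_mul (by positivity) (by positivity),
        Real.log_div (by positivity) (by positivity)]
      ring
  have hint4 : Integrable (fun x => pdata x * Real.log Z) μ :=
    hpint.mul_const _
  have hintsum : ∫ x, pdata x * Real.log (pdata x / pφ x) ∂μ
      = (∫ x, pdata x * Real.log (pdata x / pθ x) ∂μ)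
        - (∫ x, pdata x * Real.log (w x) ∂μ) + Real.log Z := by
    calc ∫ x, pdata x * Real.log (pdata x / pφ x) ∂μ
        = ∫ x, (pdata x * Real.log (pdata x / pθ x) - pdata x * Real.log (w x)
            + pdata x * Real.log Z) ∂μ := by
          exact integral_congr_ae (Filter.Eventually.of_forall hpt)
      _ = (∫ x, pdata x * Real.log (pdata x / pθ x) ∂μ)
            - (∫ x, pdata x * Real.log (w x) ∂μ)
            + ∫ x, pdata x * Real.log Z ∂μ := by
          have hint23 : Integrable (fun x => pdata x * Real.log (pdata x / pθ x)
              - pdata x * Real.log (w x)) μ := hint2.sub hint3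
          rw [integral_add hint23 hint4, integral_sub hint2 hint3]
      _ = _ := by rw [integral_mul_const, hpdata1, one_mul]
  -- key: E_pdata[log w] ≥ log Z
  have hkey : Real.log Z ≤ ∫ x, pdata x * Real.log (w x) ∂μ := by
    rw [hintsum] at hkl
    linarith
  -- pointwise: log w - log Z ≤ w/Z - 1
  have hmono : ∫ x, pdata x * (Real.log (w x) - Real.log Z) ∂μ
      ≤ ∫ x, pdata x * (w x / Z - 1) ∂μ := by
    refine integral_mono ?_ ?_ ?_
    · have : (fun x => pdata x * (Real.log (w x) - Real.log Z))
          = fun x => pdata x * Real.log (w x) - pdata x * Real.log Z := by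
        funext x; ring
      rw [this]
      exact hint3.sub hint4
    · have : (fun x => pdata x * (w x / Z - 1))
          = fun x => (pdata x * w x) * Z⁻¹ - pdata x := by
        funext x; field_simp
      rw [this]
      exact (hwdata.mul_const _).sub hpint
    · intro x
      refine mul_le_mul_of_nonneg_left ?_ (hpdata x)
      have h1 : Real.log (w x / Z) ≤ w x / Z - 1 :=
        Real.log_le_sub_one_of_pos (div_pos (hw x) hZpos)
      rwa [Real.log_div (ne_of_gt (hw x)) (ne_of_gt hZpos)] at h1
  have hL : ∫ x, pdata x * (Real.log (w x) - Real.log Z) ∂μ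
      = (∫ x, pdata x * Real.log (w x) ∂μ) - Real.log Z := by
    have : (fun x => pdata x * (Real.log (w x) - Real.log Z))
        = fun x => pdata x * Real.log (w x) - pdata x * Real.log Z := by
      funext x; ring
    rw [this, integral_sub hint3 hint4, integral_mul_const, hpdata1, one_mul]
  have hR : ∫ x, pdata x * (w x / Z - 1) ∂μ
      = (∫ x, pdata x * w x ∂μ) / Z - 1 := by
    have : (fun x => pdata x * (w x / Z - 1))
        = fun x => (pdata x * w x) * Z⁻¹ - pdata x := by
      funext x; field_simp
    rw [this, integral_sub (hwdata.mul_const _) hpint, integral_mul_const,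
      hpdata1, div_eq_mul_inv]
  rw [hL, hR] at hmono
  have : Z ≤ ∫ x, pdata x * w x ∂μ := by
    have h2 : 1 ≤ (∫ x, pdata x * w x ∂μ) / Z := by linarith
    calc Z = 1 * Z := (one_mul Z).symm
      _ ≤ ((∫ x, pdata x * w x ∂μ) / Z) * Z := by
          exact mul_le_mul_of_nonneg_right h2 (le_of_lt hZpos)
      _ = ∫ x, pdata x * w x ∂μ := div_mul_cancel₀ _ (ne_of_gt hZpos)
  rw [← hZ]
  exact this
end

section
/- (Proposition 1, condition 2) If KL(p_data ‖ p_{θ,φ}) ≤ KL(p_data ‖ p_θ), then E_{x∼p_data}[log ŵ(x)] ≥ E_{x∼p_θ}[log ŵ(x)]. -/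
open MeasureTheory

/-- Proposition 1, condition 2: if the importance resampled model `p_{θ,φ} ∝ pθ · ŵ`
does not worsen the KL fit to `p_data`, then `E_{p_data}[log ŵ] ≥ E_{pθ}[log ŵ]`. -/
theorem resampling_necessary_condition_log_weights
    {X : Type*} [MeasurableSpace X] (μ : Measure X)
    (pdata pθ w : X → ℝ) (Z : ℝ)
    (hpdata : ∀ x, 0 ≤ pdata x) (hpθ : ∀ x, 0 ≤ pθ x)
    (hpdata1 : ∫ x, pdata x ∂μ = 1) (hpθ1 : ∫ x, pθ x ∂μ = 1)
    (habs : ∀ x, pθ x = 0 → pdata x = 0)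
    (hw : ∀ x, 0 < w x)
    (hZ : Z = ∫ x, pθ x * w x ∂μ) (hZpos : 0 < Z)
    (hZfin : Integrable (fun x => pθ x * w x) μ)
    (hlogθ : Integrable (fun x => pθ x * Real.log (w x)) μ)
    (pφ : X → ℝ) (hpφ : ∀ x, pφ x = pθ x * w x / Z)
    (hint1 : Integrable (fun x => pdata x * Real.log (pdata x / pφ x)) μ)
    (hint2 : Integrable (fun x => pdata x * Real.log (pdata x / pθ x)) μ)
    (hint3 : Integrable (fun x => pdata x * Real.log (w x)) μ)
    (hkl : (∫ x, pdata x * Real.log (pdata x / pφ x) ∂μ)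
      ≤ (∫ x, pdata x * Real.log (pdata x / pθ x) ∂μ)) :
    (∫ x, pdata x * Real.log (w x) ∂μ) ≥ ∫ x, pθ x * Real.log (w x) ∂μ := by
  have hpdataInt : Integrable pdata μ := by
    by_contra h
    rw [integral_undef h] at hpdata1; norm_num at hpdata1
  have hpθInt : Integrable pθ μ := by
    by_contra h
    rw [integral_undef h] at hpθ1; norm_num at hpθ1
  -- Pointwise identity: pdata * log (pdata/pφ) = pdata * log(pdata/pθ) - pdata * log w + pdata * log Z
  have key : ∀ x, pdata x * Real.log (pdata x / pφ x)
      = pdata x * Real.log (pdata x / pθ x) - pdata x * Real.log (w x)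
        + pdata x * Real.log Z := by
    intro x
    rcases eq_or_lt_of_le (hpdata x) with h0 | hpos
    · simp [← h0]
    · have hθpos : 0 < pθ x := by
        rcases eq_or_lt_of_le (hpθ x) with h | h
        · exact absurd (habs x h.symm) (ne_of_gt hpos)
        · exact h
      have hwx := hw x
      have hφ : pφ x = pθ x * w x / Z := hpφ x
      have h1 : pdata x / pφ x = (pdata x / pθ x) / (w x) * Z := by
        rw [hφ]; field_simp
      rw [h1, Real.log_mul (by positivity) (ne_of_gt hZpos),
        Real.log_div (by positivity) (ne_of_gt hwx)]
      ring
  have hIntZ : Integrable (fun x => pdata x * Real.log Z) μ :=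
    hpdataInt.mul_const _
  have hsum : (∫ x, pdata x * Real.log (pdata x / pφ x) ∂μ)
      = (∫ x, pdata x * Real.log (pdata x / pθ x) ∂μ)
        - (∫ x, pdata x * Real.log (w x) ∂μ) + Real.log Z := by
    have : (∫ x, pdata x * Real.log (pdata x / pφ x) ∂μ)
        = ∫ x, (pdata x * Real.log (pdata x / pθ x) - pdata x * Real.log (w x)
            + pdata x * Real.log Z) ∂μ := by
      exact integral_congr_ae (Filter.Eventually.of_forall key)
    have h12 : Integrable (fun x => pdata x * Real.log (pdata x / pθ x)
        - pdata x * Real.log (w x)) μ := hint2.sub hint3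
    rw [this, integral_add h12 hIntZ, integral_sub hint2 hint3,
      integral_mul_const, hpdata1]
    ring
  -- From hkl: log Z ≤ ∫ pdata log w
  have hlhs : Real.log Z ≤ ∫ x, pdata x * Real.log (w x) ∂μ := by
    rw [hsum] at hkl; linarith
  -- Jensen via log t ≤ t - 1: ∫ pθ log w ≤ log Z
  have hrhs : (∫ x, pθ x * Real.log (w x) ∂μ) ≤ Real.log Z := by
    have hpt : ∀ x, pθ x * Real.log (w x)
        ≤ pθ x * (w x / Z) - pθ x + pθ x * Real.log Z := by
      intro x
      have hlog : Real.log (w x) ≤ w x / Z - 1 + Real.log Z := by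
        have h1 : Real.log (w x / Z) ≤ w x / Z - 1 :=
          Real.log_le_sub_one_of_pos (div_pos (hw x) hZpos)
        rw [Real.log_div (ne_of_gt (hw x)) (ne_of_gt hZpos)] at h1
        linarith
      nlinarith [hpθ x, mul_le_mul_of_nonneg_left hlog (hpθ x)]
    have hI1 : Integrable (fun x => pθ x * (w x / Z)) μ := by
      have := hZfin.div_const Z
      simpa [mul_div_assoc] using this
    have h12 : Integrable (fun x => pθ x * (w x / Z) - pθ x) μ := hI1.sub hpθInt
    have hRHSint : Integrable
        (fun x => pθ x * (w x / Z) - pθ x + pθ x * Real.log Z) μ :=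
      h12.add (hpθInt.mul_const _)
    calc (∫ x, pθ x * Real.log (w x) ∂μ)
        ≤ ∫ x, (pθ x * (w x / Z) - pθ x + pθ x * Real.log Z) ∂μ :=
          integral_mono hlogθ hRHSint hpt
      _ = Real.log Z := by
          rw [integral_add h12 (hpθInt.mul_const _),
            integral_sub hI1 hpθInt, integral_mul_const, hpθ1]
          have : (∫ x, pθ x * (w x / Z) ∂μ) = (∫ x, pθ x * w x ∂μ) / Z := by
            rw [← integral_div]
            congr 1; ext x; ring
          rw [this, ← hZ, div_self (ne_of_gt hZpos)]
          ring
  linarith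
end

section
/- The density of the sample returned by SIR with T particles is p^SIR(x; T) = E_{x_2,…,x_T ∼ p_θ}[ ŵ(x)/(ŵ(x) + ∑_{i=2}^T ŵ(x_i)) ] · T · p_θ(x), and it integrates to 1 over X. -/
open MeasureTheory
open scoped ENNReal NNReal

private lemma integrable_of_bdd01 {α : Type*} [MeasurableSpace α] (μ : Measure α)
    [IsFiniteMeasure μ] {f : α → ℝ} (hf : Measurable f) (h0 : ∀ x, 0 ≤ f x)
    (h1 : ∀ x, f x ≤ 1) : Integrable f μ :=
  (integrable_const (1 : ℝ)).mono' hf.aestronglyMeasurable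
    (Filter.Eventually.of_forall fun x => by
      rw [Real.norm_eq_abs, abs_of_nonneg (h0 x)]; exact h1 x)

/-- The SIR density with `T` particles,
`p^SIR(x; T) = E_{x₂,…,x_T ∼ pθ}[ ŵ(x) / (ŵ(x) + ∑ᵢ ŵ(xᵢ)) ] · T · pθ(x)`,
integrates to `1` over `X`. -/
theorem sir_density_integrates_to_one
    {X : Type*} [MeasurableSpace X] (μ : Measure X)
    (pθ : X → ℝ) (w : X → ℝ) (ν : Measure X) (T : ℕ) (hT : 1 ≤ T)
    (hpθ_meas : Measurable pθ) (hpθ : ∀ x, 0 ≤ pθ x) (hpθ1 : ∫ x, pθ x ∂μ = 1)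
    (hν : ν = μ.withDensity fun x => ENNReal.ofReal (pθ x))
    (hw_meas : Measurable w) (hw : ∀ x, 0 < w x)
    (hbdd : ∃ C : ℝ, ∀ x, w x ≤ C) :
    ∫ x, (∫ ω : Fin (T - 1) → X, w x / (w x + ∑ i, w (ω i))
        ∂(Measure.pi fun _ => ν)) * T * pθ x ∂μ = 1 := by
  obtain ⟨n, rfl⟩ : ∃ n, T = n + 1 := ⟨T - 1, (Nat.succ_pred_eq_of_pos hT).symm⟩
  show ∫ x, (∫ ω : Fin n → X, w x / (w x + ∑ i, w (ω i))
      ∂(Measure.pi fun _ => ν)) * ((n + 1 : ℕ) : ℝ) * pθ x ∂μ = 1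
  -- ν is a probability measure
  have hpθ_int : Integrable pθ μ := by
    by_contra h
    rw [integral_undef h] at hpθ1
    exact one_ne_zero hpθ1.symm
  have hν_prob : IsProbabilityMeasure ν := by
    constructor
    rw [hν, MeasureTheory.withDensity_apply _ MeasurableSet.univ,
      setLIntegral_univ, ← ofReal_integral_eq_lintegral_ofReal hpθ_int
        (Filter.Eventually.of_forall hpθ), hpθ1, ENNReal.ofReal_one]
  -- positivity facts
  have hsum_pos : ∀ (y : Fin (n + 1) → X), 0 < ∑ i, w (y i) := fun y =>
    Finset.sum_pos (fun i _ => hw (y i)) (by simp)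
  -- the symmetric functions
  set G : Fin (n + 1) → (Fin (n + 1) → X) → ℝ :=
    fun j y => w (y j) / ∑ i, w (y i) with hG
  have hG_meas : ∀ j, Measurable (G j) := fun j =>
    (hw_meas.comp (measurable_pi_apply j)).div
      (Finset.measurable_sum _ fun i _ => hw_meas.comp (measurable_pi_apply i))
  have hG0 : ∀ j y, 0 ≤ G j y := fun j y =>
    div_nonneg (hw (y j)).le (hsum_pos y).le
  have hG1 : ∀ j y, G j y ≤ 1 := fun j y =>
    (div_le_one (hsum_pos y)).2 (Finset.single_le_sum (fun i _ => (hw (y i)).le) (by simp))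
  have hG_int : ∀ j, Integrable (G j) (Measure.pi fun _ : Fin (n + 1) => ν) := fun j =>
    integrable_of_bdd01 _ (hG_meas j) (hG0 j) (hG1 j)
  -- exchangeability: all G j have the same integral
  have hsym : ∀ j, ∫ y, G j y ∂(Measure.pi fun _ : Fin (n + 1) => ν)
      = ∫ y, G 0 y ∂(Measure.pi fun _ : Fin (n + 1) => ν) := by
    intro j
    set e : Fin (n + 1) ≃ Fin (n + 1) := Equiv.swap j 0 with he
    have hmp := measurePreserving_piCongrLeft (fun _ : Fin (n + 1) => ν) e
    have hemb := (MeasurableEquiv.piCongrLeft (fun _ : Fin (n + 1) => X) e).measurableEmbedding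
    have key := hmp.integral_comp hemb (G j)
    rw [← key]
    congr 1
    funext y
    have happ : ∀ i, (MeasurableEquiv.piCongrLeft (fun _ : Fin (n + 1) => X) e) y i
        = y (e.symm i) := by
      intro i
      rw [MeasurableEquiv.coe_piCongrLeft]
      conv_lhs => rw [← Equiv.apply_symm_apply e i, Equiv.piCongrLeft_apply_apply]
    simp only [hG, happ]
    rw [Equiv.sum_comp e.symm (fun i => w (y i))]
    congr 2
    simp [he]
  -- sum of the G j is 1
  have hsum_G : ∀ y, ∑ j, G j y = 1 := by
    intro y
    simp only [hG]
    rw [← Finset.sum_div]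
    exact div_self (hsum_pos y).ne'
  -- hence the common integral is 1/(n+1)
  have hint_G0 : ∫ y, G 0 y ∂(Measure.pi fun _ : Fin (n + 1) => ν) = 1 / (n + 1 : ℝ) := by
    have h1 : ∑ j : Fin (n + 1), ∫ y, G j y ∂(Measure.pi fun _ : Fin (n + 1) => ν) = 1 := by
      rw [← integral_finset_sum _ fun j _ => hG_int j]
      simp [hsum_G]
    rw [Finset.sum_congr rfl fun j _ => hsym j, Finset.sum_const, Finset.card_univ,
      Fintype.card_fin, nsmul_eq_mul] at h1
    field_simp at h1 ⊢
    push_cast at h1; linarith [h1]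
  -- rewrite the outer integral over μ as an integral over ν
  have hwd : ν = μ.withDensity fun x => ((pθ x).toNNReal : ℝ≥0∞) := hν
  have hswap : ∫ x, (∫ ω : Fin n → X, w x / (w x + ∑ i, w (ω i))
        ∂(Measure.pi fun _ => ν)) * ((n : ℝ) + 1) * pθ x ∂μ
      = ∫ x, (∫ ω : Fin n → X, w x / (w x + ∑ i, w (ω i))
        ∂(Measure.pi fun _ => ν)) * ((n : ℝ) + 1) ∂ν := by
    rw [hwd, integral_withDensity_eq_integral_smul hpθ_meas.real_toNNReal]
    refine integral_congr_ae (Filter.Eventually.of_forall fun x => ?_)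
    simp only [NNReal.smul_def, Real.coe_toNNReal _ (hpθ x), smul_eq_mul]
    ring
  -- identify the iterated integral with the integral of G 0
  set H : X × (Fin n → X) → ℝ := fun p => w p.1 / (w p.1 + ∑ i, w (p.2 i)) with hH
  have hden_pos : ∀ p : X × (Fin n → X), 0 < w p.1 + ∑ i, w (p.2 i) := fun p =>
    add_pos_of_pos_of_nonneg (hw p.1) (Finset.sum_nonneg fun i _ => (hw (p.2 i)).le)
  have hH_meas : Measurable H :=
    (hw_meas.comp measurable_fst).div ((hw_meas.comp measurable_fst).add
      (Finset.measurable_sum _ fun i _ =>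
        hw_meas.comp ((measurable_pi_apply i).comp measurable_snd)))
  have hH_int : Integrable H ((ν).prod (Measure.pi fun _ : Fin n => ν)) :=
    integrable_of_bdd01 _ hH_meas (fun p => div_nonneg (hw p.1).le (hden_pos p).le)
      (fun p => (div_le_one (hden_pos p)).2
        (le_add_of_nonneg_right (Finset.sum_nonneg fun i _ => (hw (p.2 i)).le)))
  have hiter : ∫ x, (∫ ω : Fin n → X, w x / (w x + ∑ i, w (ω i))
        ∂(Measure.pi fun _ => ν)) ∂ν
      = ∫ y, G 0 y ∂(Measure.pi fun _ : Fin (n + 1) => ν) := by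
    rw [← MeasureTheory.integral_prod H hH_int]
    have hmp := measurePreserving_piFinSuccAbove (fun _ : Fin (n + 1) => ν) 0
    rw [← hmp.map_eq, MeasureTheory.integral_map_equiv (MeasurableEquiv.piFinSuccAbove (fun _ : Fin (n + 1) => X) 0) H]
    congr 1
    funext y
    simp only [hH, hG, MeasurableEquiv.piFinSuccAbove_apply, Fin.insertNthEquiv,
      Equiv.coe_fn_symm_mk, Fin.removeNth]
    rw [Fin.sum_univ_succAbove (fun i => w (y i)) 0]
  have hcast : ((n + 1 : ℕ) : ℝ) = (n : ℝ) + 1 := by push_cast; ring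
  rw [hcast, hswap, MeasureTheory.integral_mul_const, hiter, hint_G0]
  field_simp
end
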